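/- If the normed space (ℝ^d, ⦀·⦀) is strictly convex, then the sequence of coordinate-k norms is strictly decreasingly graded with respect to the ℓ0 pseudonorm: for every l ∈ {1,…,d} and every x ∈ ℝ^d, ℓ0(x) ≤ l if and only if ⦀x⦀_l = ⦀x⦀. -/

import Mathlib

open scoped BigOperators

noncomputable section

/-- The Euclidean pairing `⟨x,y⟩ = ∑ i, x i * y i` on `Fin d → ℝ`. -/
def dotp {d : ℕ} (x y : Fin d → ℝ) : ℝ := ∑ i, x i * y i

/-- The coordinate subspace `R_K` of vectors vanishing outside `K`. -/
def RK {d : ℕ} (K : Finset (Fin d)) : Set (Fin d → ℝ) := {x | ∀ j ∉ K, x j = 0}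

/-- Orthogonal projection onto `R_K`. -/
def projK {d : ℕ} (K : Finset (Fin d)) (x : Fin d → ℝ) : Fin d → ℝ :=
  fun i => if i ∈ K then x i else 0

/-- The ℓ0 pseudonorm: number of nonzero components. -/
def ell0 {d : ℕ} (x : Fin d → ℝ) : ℕ := (Function.support x).ncard

/-- `N` is a norm on `ℝ^d`. -/
structure IsNorm {d : ℕ} (N : (Fin d → ℝ) → ℝ) : Prop where
  eq_zero_iff : ∀ x, N x = 0 ↔ x = 0
  smul : ∀ (c : ℝ) (x : Fin d → ℝ), N (c • x) = |c| * N x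
  triangle : ∀ x y, N (x + y) ≤ N x + N y

/-- `⦀y⦀_{K,★}`: the dual norm (w.r.t. the Euclidean pairing), on the subspace `R_K`,
of the restriction of `N` to `R_K`. -/
def restStar {d : ℕ} (N : (Fin d → ℝ) → ℝ) (K : Finset (Fin d)) (y : Fin d → ℝ) : ℝ :=
  sSup {r | ∃ x ∈ RK K, N x ≤ 1 ∧ r = dotp x y}

/-- The dual coordinate-k norm `⦀y⦀_{k,★} = sup_{|K| ≤ k} ⦀y_K⦀_{K,★}`. -/
def dualCoord {d : ℕ} (N : (Fin d → ℝ) → ℝ) (k : ℕ) (y : Fin d → ℝ) : ℝ :=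
  sSup {r | ∃ K : Finset (Fin d), K.card ≤ k ∧ r = restStar N K (projK K y)}

/-- The coordinate-k norm: the dual norm of the dual coordinate-k norm. -/
def coordNorm {d : ℕ} (N : (Fin d → ℝ) → ℝ) (k : ℕ) (x : Fin d → ℝ) : ℝ :=
  sSup {r | ∃ y : Fin d → ℝ, dualCoord N k y ≤ 1 ∧ r = dotp x y}

set_option linter.unusedSectionVars false

variable {d : ℕ} {N : (Fin d → ℝ) → ℝ}

lemma nzero (hN : IsNorm N) : N 0 = 0 := (hN.eq_zero_iff 0).2 rfl

lemma nneg (hN : IsNorm N) (x : Fin d → ℝ) : 0 ≤ N x := by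
  have h := hN.triangle x (-x)
  have h2 : N (-x) = N x := by
    rw [show -x = (-1 : ℝ) • x by simp, hN.smul]; simp
  rw [add_neg_cancel, nzero hN] at h; linarith

lemma npos (hN : IsNorm N) {x : Fin d → ℝ} (hx : x ≠ 0) : 0 < N x :=
  lt_of_le_of_ne (nneg hN x) (fun h => hx ((hN.eq_zero_iff x).1 h.symm))

lemma nsum (hN : IsNorm N) {ι : Type*} (s : Finset ι) (f : ι → Fin d → ℝ) :
    N (∑ i ∈ s, f i) ≤ ∑ i ∈ s, N (f i) := by
  classical
  induction s using Finset.induction with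
  | empty => simp [nzero hN]
  | insert _ _ h ih =>
    rw [Finset.sum_insert h, Finset.sum_insert h]
    exact le_trans (hN.triangle _ _) (by linarith)

lemma n_le (hN : IsNorm N) (x : Fin d → ℝ) :
    N x ≤ ∑ i, |x i| * N (Pi.single i 1) := by
  have hx : x = ∑ i, x i • (Pi.single i (1:ℝ) : Fin d → ℝ) := by
    ext j; simp [Pi.single_apply, eq_comm]
  calc N x = N (∑ i, x i • (Pi.single i (1:ℝ) : Fin d → ℝ)) := by rw [← hx]
    _ ≤ ∑ i, N (x i • (Pi.single i (1:ℝ) : Fin d → ℝ)) := nsum hN _ _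
    _ = ∑ i, |x i| * N (Pi.single i 1) := by simp [hN.smul]

lemma ncont (hN : IsNorm N) : Continuous N := by
  have key : ∀ x y : Fin d → ℝ, N x - N y ≤ (∑ i, N (Pi.single i (1:ℝ))) * dist x y := by
    intro x y
    have h1 : N x ≤ N (x - y) + N y := by
      have := hN.triangle (x - y) y; simpa using this
    have h2 : N (x - y) ≤ ∑ i, |(x - y) i| * N (Pi.single i 1) := n_le hN _
    have h3 : ∑ i, |(x - y) i| * N (Pi.single i 1) ≤ ∑ i, dist x y * N (Pi.single i 1) := by
      apply Finset.sum_le_sum; intro i _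
      apply mul_le_mul_of_nonneg_right _ (nneg hN _)
      calc |(x - y) i| = ‖(x - y) i‖ := rfl
        _ ≤ ‖x - y‖ := norm_le_pi_norm _ i
        _ = dist x y := by rw [dist_eq_norm]
    rw [← Finset.mul_sum, mul_comm] at h3
    linarith [h3, h2, h1]
  rw [Metric.continuous_iff]
  intro x ε hε
  set C := ∑ i, N (Pi.single i (1:ℝ)) with hC
  have hC0 : 0 ≤ C := Finset.sum_nonneg fun i _ => nneg hN _
  refine ⟨ε / (C + 1), by positivity, fun y hy => ?_⟩
  have h1 := key y x
  have h2 := key x y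
  rw [Real.dist_eq]
  rw [dist_comm] at h1
  have : C * dist y x < ε := by
    calc C * dist y x ≤ C * (ε / (C+1)) := by
          apply mul_le_mul_of_nonneg_left (le_of_lt hy) hC0
      _ < (C + 1) * (ε / (C+1)) := by
          exact mul_lt_mul_of_pos_right (by linarith) (by positivity)
      _ = ε := by field_simp
  have hd : dist x y = dist y x := dist_comm x y
  rw [abs_lt]
  constructor <;> nlinarith [this, h1, h2, hd]

lemma dotp_zero_right (x : Fin d → ℝ) : dotp x 0 = 0 := by simp [dotp]

lemma dotp_zero_left (y : Fin d → ℝ) : dotp 0 y = 0 := by simp [dotp]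

lemma dotp_smul_left (c : ℝ) (x y : Fin d → ℝ) : dotp (c • x) y = c * dotp x y := by
  simp [dotp, Finset.mul_sum, mul_assoc]

lemma dotp_proj {K : Finset (Fin d)} {z : Fin d → ℝ} (hz : z ∈ RK K) (y : Fin d → ℝ) :
    dotp z (projK K y) = dotp z y := by
  unfold dotp projK
  apply Finset.sum_congr rfl
  intro i _
  by_cases h : i ∈ K
  · simp [h]
  · simp [h, hz i h]

lemma dotp_abs_le (x y : Fin d → ℝ) : dotp x y ≤ ∑ i, |x i| * |y i| := by
  unfold dotp
  apply Finset.sum_le_sum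
  intro i _
  calc x i * y i ≤ |x i * y i| := le_abs_self _
    _ = |x i| * |y i| := abs_mul _ _

/-- Lower bound: the norm dominates a multiple of the sup norm (needs `d ≥ 1`). -/
lemma exists_low (hN : IsNorm N) (hd : 1 ≤ d) :
    ∃ m : ℝ, 0 < m ∧ ∀ x : Fin d → ℝ, m * ‖x‖ ≤ N x := by
  have hsph : IsCompact (Metric.sphere (0 : Fin d → ℝ) 1) := isCompact_sphere _ _
  have hne : (Metric.sphere (0 : Fin d → ℝ) 1).Nonempty := by
    have h0 : (0 : ℕ) < d := hd
    set v : Fin d → ℝ := Pi.single ⟨0, h0⟩ 1 with hv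
    have hvne : v ≠ 0 := by
      intro h
      have := congrFun h ⟨0, h0⟩
      simp [hv] at this
    refine ⟨‖v‖⁻¹ • v, ?_⟩
    simp only [Metric.mem_sphere, dist_zero_right, norm_smul, norm_inv, norm_norm]
    rw [inv_mul_cancel₀ (norm_ne_zero_iff.2 hvne)]
  obtain ⟨z, hz, hmin⟩ := hsph.exists_isMinOn hne (ncont hN).continuousOn
  have hz1 : ‖z‖ = 1 := by simpa [dist_zero_right] using hz
  have hzne : z ≠ 0 := by intro h; rw [h] at hz1; simp at hz1
  refine ⟨N z, npos hN hzne, fun x => ?_⟩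
  rcases eq_or_ne x 0 with rfl | hx
  · simp [nzero hN]
  · have hnx : (0:ℝ) < ‖x‖ := norm_pos_iff.2 hx
    have hu : (‖x‖⁻¹ • x) ∈ Metric.sphere (0 : Fin d → ℝ) 1 := by
      simp only [Metric.mem_sphere, dist_zero_right, norm_smul, norm_inv, norm_norm]
      rw [inv_mul_cancel₀ (ne_of_gt hnx)]
    have h1 : N z ≤ N (‖x‖⁻¹ • x) := hmin hu
    rw [hN.smul] at h1
    rw [abs_of_pos (inv_pos.2 hnx)] at h1
    calc N z * ‖x‖ ≤ ‖x‖⁻¹ * N x * ‖x‖ := by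
          apply mul_le_mul_of_nonneg_right h1 (le_of_lt hnx)
      _ = N x := by field_simp

section Star
variable (hN : IsNorm N) {m : ℝ} (hm : 0 < m) (hlow : ∀ x : Fin d → ℝ, m * ‖x‖ ≤ N x)

include hN in
lemma restStar_set_nonempty (K : Finset (Fin d)) (y : Fin d → ℝ) :
    {r | ∃ x ∈ RK K, N x ≤ 1 ∧ r = dotp x y}.Nonempty :=
  ⟨0, 0, fun j _ => rfl, by rw [nzero hN]; norm_num, (dotp_zero_left y).symm⟩

include hN hm hlow in
lemma restStar_set_bdd (K : Finset (Fin d)) (y : Fin d → ℝ) :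
    ∀ r ∈ {r | ∃ x ∈ RK K, N x ≤ 1 ∧ r = dotp x y}, r ≤ m⁻¹ * ∑ i, |y i| := by
  rintro r ⟨z, _, hNz, rfl⟩
  have hz : ‖z‖ ≤ m⁻¹ := by
    have h1 : m * ‖z‖ ≤ 1 := le_trans (hlow z) hNz
    calc ‖z‖ = m⁻¹ * (m * ‖z‖) := by field_simp
      _ ≤ m⁻¹ * 1 := mul_le_mul_of_nonneg_left h1 (by positivity)
      _ = m⁻¹ := mul_one _
  calc dotp z y ≤ ∑ i, |z i| * |y i| := dotp_abs_le z y
    _ ≤ ∑ i, m⁻¹ * |y i| := by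
        apply Finset.sum_le_sum; intro i _
        apply mul_le_mul_of_nonneg_right _ (abs_nonneg _)
        calc |z i| = ‖z i‖ := rfl
          _ ≤ ‖z‖ := norm_le_pi_norm _ i
          _ ≤ m⁻¹ := hz
    _ = m⁻¹ * ∑ i, |y i| := by rw [Finset.mul_sum]

include hN hm hlow in
lemma restStar_bddAbove (K : Finset (Fin d)) (y : Fin d → ℝ) :
    BddAbove {r | ∃ x ∈ RK K, N x ≤ 1 ∧ r = dotp x y} :=
  ⟨m⁻¹ * ∑ i, |y i|, fun r hr => restStar_set_bdd hN hm hlow K y r hr⟩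

include hN hm hlow in
lemma le_restStar {K : Finset (Fin d)} {z : Fin d → ℝ} (hz : z ∈ RK K) (hNz : N z ≤ 1)
    (y : Fin d → ℝ) : dotp z y ≤ restStar N K y :=
  le_csSup (restStar_bddAbove hN hm hlow K y) ⟨z, hz, hNz, rfl⟩

include hN hm hlow in
lemma restStar_le_inv (K : Finset (Fin d)) (y : Fin d → ℝ) :
    restStar N K y ≤ m⁻¹ * ∑ i, |y i| :=
  csSup_le (restStar_set_nonempty hN K y) (restStar_set_bdd hN hm hlow K y)

include hN in
lemma restStar_le_one {K : Finset (Fin d)} {y : Fin d → ℝ}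
    (h : ∀ z, N z ≤ 1 → dotp z y ≤ 1) : restStar N K (projK K y) ≤ 1 := by
  apply csSup_le (restStar_set_nonempty hN K _)
  rintro r ⟨z, hz, hNz, rfl⟩
  rw [dotp_proj hz]
  exact h z hNz

include hN hm hlow in
lemma dualCoord_bddAbove (k : ℕ) (y : Fin d → ℝ) :
    BddAbove {r | ∃ K : Finset (Fin d), K.card ≤ k ∧ r = restStar N K (projK K y)} := by
  refine ⟨m⁻¹ * ∑ i, |y i|, ?_⟩
  rintro r ⟨K, _, rfl⟩
  calc restStar N K (projK K y) ≤ m⁻¹ * ∑ i, |projK K y i| := restStar_le_inv hN hm hlow K _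
    _ ≤ m⁻¹ * ∑ i, |y i| := by
        apply mul_le_mul_of_nonneg_left _ (le_of_lt (inv_pos.2 hm))
        apply Finset.sum_le_sum; intro i _
        unfold projK; split <;> simp [abs_nonneg]

lemma dualCoord_set_nonempty (k : ℕ) (y : Fin d → ℝ) :
    {r | ∃ K : Finset (Fin d), K.card ≤ k ∧ r = restStar N K (projK K y)}.Nonempty :=
  ⟨restStar N ∅ (projK ∅ y), ∅, by simp, rfl⟩

include hN hm hlow in
lemma restStar_le_dualCoord {k : ℕ} {K : Finset (Fin d)} (hK : K.card ≤ k) (y : Fin d → ℝ) :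
    restStar N K (projK K y) ≤ dualCoord N k y :=
  le_csSup (dualCoord_bddAbove hN hm hlow k y) ⟨K, hK, rfl⟩

include hN in
lemma dualCoord_le_one {k : ℕ} {y : Fin d → ℝ}
    (h : ∀ z, N z ≤ 1 → dotp z y ≤ 1) : dualCoord N k y ≤ 1 :=
  csSup_le (dualCoord_set_nonempty k y) (by rintro r ⟨K, _, rfl⟩; exact restStar_le_one hN h)

include hN in
lemma dualCoord_zero_le_one (k : ℕ) : dualCoord N k (0 : Fin d → ℝ) ≤ 1 :=
  dualCoord_le_one hN (fun z _ => by rw [dotp_zero_right]; norm_num)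

end Star

section Coord
variable (hN : IsNorm N) {m : ℝ} (hm : 0 < m) (hlow : ∀ x : Fin d → ℝ, m * ‖x‖ ≤ N x)
  {l : ℕ} (hl : 1 ≤ l)

include hN hm hlow hl in
lemma abs_le_of_dualCoord {y : Fin d → ℝ} (hy : dualCoord N l y ≤ 1) (i : Fin d) :
    |y i| ≤ N (Pi.single i 1) := by
  set e : Fin d → ℝ := Pi.single i 1 with he
  have hene : e ≠ 0 := by
    intro h; have := congrFun h i; simp [he] at this
  have hNe : 0 < N e := npos hN hene
  set c : ℝ := (N e)⁻¹ * (if 0 ≤ y i then 1 else -1) with hc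
  have habs : |c| = (N e)⁻¹ := by
    rw [hc, abs_mul]
    rw [abs_of_pos (inv_pos.2 hNe)]
    split <;> simp
  have hzK : (c • e) ∈ RK {i} := by
    intro j hj
    simp only [Finset.mem_singleton] at hj
    simp [he, Pi.single_apply, hj, Pi.smul_apply]
  have hNz : N (c • e) ≤ 1 := by
    rw [hN.smul, habs, inv_mul_cancel₀ (ne_of_gt hNe)]
  have hdot : dotp (c • e) y = (N e)⁻¹ * |y i| := by
    unfold dotp
    rw [Finset.sum_eq_single i]
    · simp only [Pi.smul_apply, smul_eq_mul, he, Pi.single_eq_same, hc]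
      rcases le_or_gt 0 (y i) with h | h
      · rw [if_pos h, abs_of_nonneg h]; ring
      · rw [if_neg (not_le.2 h), abs_of_neg h]; ring
    · intro j _ hj
      simp [he, Pi.single_apply, hj, Pi.smul_apply]
    · intro h; exact absurd (Finset.mem_univ i) h
  have h1 : dotp (c • e) y ≤ dualCoord N l y := by
    calc dotp (c • e) y = dotp (c • e) (projK {i} y) := (dotp_proj hzK y).symm
      _ ≤ restStar N {i} (projK {i} y) := le_restStar hN hm hlow hzK hNz _
      _ ≤ dualCoord N l y := restStar_le_dualCoord hN hm hlow (by simp [hl]) y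
  rw [hdot] at h1
  have h2 : (N e)⁻¹ * |y i| ≤ 1 := le_trans h1 hy
  calc |y i| = N e * ((N e)⁻¹ * |y i|) := by field_simp
    _ ≤ N e * 1 := mul_le_mul_of_nonneg_left h2 (le_of_lt hNe)
    _ = N e := mul_one _

include hN hm hlow hl in
lemma coordNorm_bddAbove (x : Fin d → ℝ) :
    BddAbove {r | ∃ y : Fin d → ℝ, dualCoord N l y ≤ 1 ∧ r = dotp x y} := by
  refine ⟨∑ i, |x i| * N (Pi.single i 1), ?_⟩
  rintro r ⟨y, hy, rfl⟩
  calc dotp x y ≤ ∑ i, |x i| * |y i| := dotp_abs_le x y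
    _ ≤ ∑ i, |x i| * N (Pi.single i 1) := by
        apply Finset.sum_le_sum; intro i _
        exact mul_le_mul_of_nonneg_left (abs_le_of_dualCoord hN hm hlow hl hy i) (abs_nonneg _)

include hN in
lemma coordNorm_set_nonempty (x : Fin d → ℝ) :
    {r | ∃ y : Fin d → ℝ, dualCoord N l y ≤ 1 ∧ r = dotp x y}.Nonempty :=
  ⟨0, 0, dualCoord_zero_le_one hN l, (dotp_zero_right x).symm⟩

include hN hm hlow in
lemma coordNorm_le_N {x : Fin d → ℝ} {K : Finset (Fin d)} (hK : K.card ≤ l)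
    (hsupp : x ∈ RK K) : coordNorm N l x ≤ N x := by
  apply csSup_le (coordNorm_set_nonempty hN x)
  rintro r ⟨y, hy, rfl⟩
  rcases eq_or_ne x 0 with rfl | hx
  · rw [dotp_zero_left]; exact nneg hN 0
  · have hNx : 0 < N x := npos hN hx
    have hzK : ((N x)⁻¹ • x) ∈ RK K := by
      intro j hj; simp [Pi.smul_apply, hsupp j hj]
    have hNz : N ((N x)⁻¹ • x) ≤ 1 := by
      rw [hN.smul, abs_of_pos (inv_pos.2 hNx), inv_mul_cancel₀ (ne_of_gt hNx)]
    have h1 : dotp ((N x)⁻¹ • x) y ≤ 1 := by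
      calc dotp ((N x)⁻¹ • x) y = dotp ((N x)⁻¹ • x) (projK K y) := (dotp_proj hzK y).symm
        _ ≤ restStar N K (projK K y) := le_restStar hN hm hlow hzK hNz _
        _ ≤ dualCoord N l y := restStar_le_dualCoord hN hm hlow hK y
        _ ≤ 1 := hy
    rw [dotp_smul_left] at h1
    calc dotp x y = N x * ((N x)⁻¹ * dotp x y) := by field_simp
      _ ≤ N x * 1 := mul_le_mul_of_nonneg_left h1 (le_of_lt hNx)
      _ = N x := mul_one _

end Coord

lemma clm_eq_dotp (f : (Fin d → ℝ) →L[ℝ] ℝ) (z : Fin d → ℝ) :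
    dotp z (fun i => f (Pi.single i 1)) = f z := by
  have hz : z = ∑ i, z i • (Pi.single i (1:ℝ) : Fin d → ℝ) := by
    ext j; simp [Pi.single_apply, eq_comm]
  conv_rhs => rw [hz]
  rw [map_sum]
  unfold dotp
  apply Finset.sum_congr rfl
  intro i _
  rw [map_smul]
  simp [smul_eq_mul]

lemma dotp_smul_right (c : ℝ) (x y : Fin d → ℝ) : dotp x (c • y) = c * dotp x y := by
  simp [dotp, Finset.mul_sum]; apply Finset.sum_congr rfl; intros; ring

section GE
variable (hN : IsNorm N) {m : ℝ} (hm : 0 < m) (hlow : ∀ x : Fin d → ℝ, m * ‖x‖ ≤ N x)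
  {l : ℕ} (hl : 1 ≤ l)

include hN hm hlow hl in
lemma coordNorm_ge_N (x : Fin d → ℝ) : N x ≤ coordNorm N l x := by
  rcases eq_or_ne x 0 with rfl | hx
  · rw [nzero hN]
    exact le_csSup_of_le (coordNorm_bddAbove hN hm hlow hl 0)
      ⟨(0 : Fin d → ℝ), dualCoord_zero_le_one hN l, rfl⟩ (by simp [dotp])
  · have hNx : 0 < N x := npos hN hx
    set u : Fin d → ℝ := (N x)⁻¹ • x with hu
    have hNu : N u = 1 := by
      rw [hu, hN.smul, abs_of_pos (inv_pos.2 hNx), inv_mul_cancel₀ (ne_of_gt hNx)]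
    set s : Set (Fin d → ℝ) := {z | N z < 1} with hs
    have hsopen : IsOpen s := isOpen_lt (ncont hN) continuous_const
    have hsconv : Convex ℝ s := by
      intro z hz w hw a b ha hb hab
      have h1 : N (a • z + b • w) ≤ a * N z + b * N w := by
        calc N (a • z + b • w) ≤ N (a • z) + N (b • w) := hN.triangle _ _
          _ = a * N z + b * N w := by rw [hN.smul, hN.smul, abs_of_nonneg ha, abs_of_nonneg hb]
      have hz' : N z < 1 := hz
      have hw' : N w < 1 := hw
      show N (a • z + b • w) < 1
      rcases eq_or_lt_of_le ha with rfl | ha'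
      · simp only [zero_add] at hab; subst hab; simp only [zero_smul, one_smul, zero_add]
        simpa using hw'
      · nlinarith
    have husc : u ∉ s := by rw [hs]; simp [hNu]
    obtain ⟨f, hf⟩ := geometric_hahn_banach_open_point hsconv hsopen husc
    have hf0 : (0:ℝ) < f u := by
      have h0 : (0 : Fin d → ℝ) ∈ s := by simp [hs, nzero hN]
      have := hf 0 h0
      simpa using this
    set y : Fin d → ℝ := (f u)⁻¹ • (fun i => f (Pi.single i 1)) with hy
    have hdot : ∀ z, dotp z y = (f u)⁻¹ * f z := by
      intro z
      rw [hy, dotp_smul_right, clm_eq_dotp]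
    have hky : ∀ z, N z ≤ 1 → dotp z y ≤ 1 := by
      intro z hz
      rw [hdot]
      rw [inv_mul_le_iff₀ hf0, mul_one]
      by_contra hcon
      push_neg at hcon
      have hfz : 0 < f z := lt_trans hf0 hcon
      obtain ⟨t, ht1, ht2⟩ := exists_between ((div_lt_one hfz).2 hcon)
      have htpos : 0 < t := lt_trans (div_pos hf0 hfz) ht1
      have hts : (t • z) ∈ s := by
        show N (t • z) < 1
        rw [hN.smul, abs_of_pos htpos]
        nlinarith
      have := hf _ hts
      rw [map_smul, smul_eq_mul] at this
      rw [div_lt_iff₀ hfz] at ht1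
      linarith
    have hdc : dualCoord N l y ≤ 1 := dualCoord_le_one hN hky
    have hxy : dotp x y = N x := by
      rw [hdot]
      have : f x = N x * f u := by
        conv_lhs => rw [show x = N x • u by rw [hu, smul_smul, mul_inv_cancel₀ (ne_of_gt hNx), one_smul]]
        rw [map_smul, smul_eq_mul]
      rw [this]; field_simp
    calc N x = dotp x y := hxy.symm
      _ ≤ coordNorm N l x := le_csSup (coordNorm_bddAbove hN hm hlow hl x) ⟨y, hdc, rfl⟩

end GE

lemma isCompact_convexJoin {s t : Set (Fin d → ℝ)} (hs : IsCompact s) (ht : IsCompact t) :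
    IsCompact (convexJoin ℝ s t) := by
  have heq : convexJoin ℝ s t =
      (fun p : ((Fin d → ℝ) × (Fin d → ℝ)) × ℝ => (1 - p.2) • p.1.1 + p.2 • p.1.2) ''
        ((s ×ˢ t) ×ˢ Set.Icc (0:ℝ) 1) := by
    ext v
    constructor
    · rintro hv
      rw [convexJoin] at hv
      simp only [Set.mem_iUnion] at hv
      obtain ⟨a, ha, b, hb, hseg⟩ := hv
      rw [segment_eq_image] at hseg
      obtain ⟨θ, hθ, rfl⟩ := hseg
      exact ⟨((a, b), θ), ⟨⟨ha, hb⟩, hθ⟩, rfl⟩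
    · rintro ⟨⟨⟨a, b⟩, θ⟩, ⟨⟨ha, hb⟩, hθ⟩, rfl⟩
      rw [convexJoin]
      simp only [Set.mem_iUnion]
      exact ⟨a, ha, b, hb, segment_eq_image ℝ a b ▸ ⟨θ, hθ, rfl⟩⟩
  rw [heq]
  apply IsCompact.image ((hs.prod ht).prod isCompact_Icc)
  fun_prop

lemma isCompact_convexHull_finite_union {ι : Type*} [DecidableEq ι] (f : ι → Set (Fin d → ℝ))
    (hcpt : ∀ i, IsCompact (f i)) (hconv : ∀ i, Convex ℝ (f i)) (hne : ∀ i, (f i).Nonempty)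
    (A : Finset ι) : IsCompact (convexHull ℝ (⋃ i ∈ A, f i)) := by
  induction A using Finset.induction with
  | empty => simp
  | @insert a A ha ih =>
    rcases A.eq_empty_or_nonempty with rfl | hAne
    · simp only [Finset.mem_insert, Finset.notMem_empty, or_false, Set.iUnion_iUnion_eq_left]
      rw [(hconv a).convexHull_eq]
      exact hcpt a
    · have hU : (⋃ i ∈ A, f i).Nonempty := by
        obtain ⟨b, hb⟩ := hAne
        obtain ⟨z, hz⟩ := hne b
        exact ⟨z, Set.mem_biUnion hb hz⟩
      rw [show (⋃ i ∈ insert a A, f i) = f a ∪ ⋃ i ∈ A, f i by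
        simp [Set.iUnion_or, Set.iUnion_union_distrib]]
      rw [convexHull_union (hne a) hU]
      rw [(hconv a).convexHull_eq]
      exact isCompact_convexJoin (hcpt a) ih

section Hard
variable (hN : IsNorm N) {m : ℝ} (hm : 0 < m) (hlow : ∀ x : Fin d → ℝ, m * ‖x‖ ≤ N x)
  {l : ℕ} (hl : 1 ≤ l)

lemma isClosed_RK (K : Finset (Fin d)) : IsClosed (RK K : Set (Fin d → ℝ)) := by
  have : (RK K : Set (Fin d → ℝ)) = ⋂ j ∈ (Kᶜ : Finset (Fin d)), (fun x : Fin d → ℝ => x j) ⁻¹' {0} := by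
    ext z; simp [RK]
  rw [this]
  exact isClosed_biInter fun j _ => IsClosed.preimage (continuous_apply j) isClosed_singleton

lemma convex_RK (K : Finset (Fin d)) : Convex ℝ (RK K : Set (Fin d → ℝ)) := by
  intro z hz w hw a b _ _ _
  intro j hj
  simp [Pi.add_apply, Pi.smul_apply, hz j hj, hw j hj]

include hN in
lemma nconvex_ball : Convex ℝ {z : Fin d → ℝ | N z ≤ 1} := by
  intro z hz w hw a b ha hb hab
  show N (a • z + b • w) ≤ 1
  calc N (a • z + b • w) ≤ N (a • z) + N (b • w) := hN.triangle _ _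
    _ = a * N z + b * N w := by rw [hN.smul, hN.smul, abs_of_nonneg ha, abs_of_nonneg hb]
    _ ≤ a * 1 + b * 1 := by
        apply add_le_add (mul_le_mul_of_nonneg_left hz ha) (mul_le_mul_of_nonneg_left hw hb)
    _ = 1 := by rw [mul_one, mul_one, hab]

include hN hm hlow in
lemma nisCompact_ball : IsCompact {z : Fin d → ℝ | N z ≤ 1} := by
  have hclosed : IsClosed {z : Fin d → ℝ | N z ≤ 1} :=
    isClosed_le (ncont hN) continuous_const
  apply IsCompact.of_isClosed_subset (isCompact_closedBall (0 : Fin d → ℝ) m⁻¹) hclosed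
  intro z hz
  simp only [Metric.mem_closedBall, dist_zero_right]
  have h1 : m * ‖z‖ ≤ 1 := le_trans (hlow z) hz
  calc ‖z‖ = m⁻¹ * (m * ‖z‖) := by field_simp
    _ ≤ m⁻¹ * 1 := mul_le_mul_of_nonneg_left h1 (by positivity)
    _ = m⁻¹ := mul_one _

include hN hm hlow hl in
lemma ell0_le_of_coordNorm_eq
    (hsc : ∀ x : Fin d → ℝ, N x = 1 → x ∈ Set.extremePoints ℝ {z : Fin d → ℝ | N z ≤ 1})
    (x : Fin d → ℝ) (heq : coordNorm N l x = N x) : ell0 x ≤ l := by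
  classical
  rcases eq_or_ne x 0 with rfl | hx
  · simp [ell0]
  · have hNx : 0 < N x := npos hN hx
    set u : Fin d → ℝ := (N x)⁻¹ • x with hu
    have hNu : N u = 1 := by
      rw [hu, hN.smul, abs_of_pos (inv_pos.2 hNx), inv_mul_cancel₀ (ne_of_gt hNx)]
    set B : Set (Fin d → ℝ) := {z | N z ≤ 1} with hB
    set f : Finset (Fin d) → Set (Fin d → ℝ) := fun K => B ∩ RK K with hf
    set Kc : Finset (Finset (Fin d)) := Finset.univ.filter (fun K : Finset (Fin d) => K.card ≤ l)
      with hKc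
    set S₀ : Set (Fin d → ℝ) := ⋃ K ∈ Kc, f K with hS₀
    set C : Set (Fin d → ℝ) := convexHull ℝ S₀ with hC
    have hfcpt : ∀ K, IsCompact (f K) := fun K =>
      (nisCompact_ball hN hm hlow).inter_right (isClosed_RK K)
    have hfconv : ∀ K, Convex ℝ (f K) := fun K => (nconvex_ball hN).inter (convex_RK K)
    have hfne : ∀ K, (f K).Nonempty := fun K =>
      ⟨0, by simp [hf, hB, nzero hN], fun j _ => rfl⟩
    have hCcpt : IsCompact C := isCompact_convexHull_finite_union f hfcpt hfconv hfne Kc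
    have hS₀B : S₀ ⊆ B := by
      rw [hS₀]; exact Set.iUnion₂_subset fun K _ => Set.inter_subset_left
    have hCB : C ⊆ B := convexHull_min hS₀B (nconvex_ball hN)
    -- Step 1: u ∈ C
    have huC : u ∈ C := by
      by_contra hu'
      obtain ⟨g, c, hg, hc⟩ :=
        geometric_hahn_banach_closed_point (convex_convexHull ℝ S₀) hCcpt.isClosed hu'
      have h0C : (0 : Fin d → ℝ) ∈ C := by
        apply subset_convexHull
        rw [hS₀]
        apply Set.mem_biUnion (show (∅ : Finset (Fin d)) ∈ Kc by simp [hKc])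
        exact ⟨by simp [hB, nzero hN], fun j _ => rfl⟩
      have hcpos : 0 < c := by have := hg 0 h0C; simpa using this
      set y : Fin d → ℝ := c⁻¹ • (fun i => g (Pi.single i 1)) with hy
      have hdot : ∀ z, dotp z y = c⁻¹ * g z := by
        intro z; rw [hy, dotp_smul_right, clm_eq_dotp]
      have hdc : dualCoord N l y ≤ 1 := by
        apply csSup_le (dualCoord_set_nonempty l y)
        rintro r ⟨K, hK, rfl⟩
        apply csSup_le (restStar_set_nonempty hN K _)
        rintro r ⟨z, hz, hNz, rfl⟩
        rw [dotp_proj hz, hdot]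
        have hzC : z ∈ C := by
          apply subset_convexHull
          rw [hS₀]
          exact Set.mem_biUnion (Finset.mem_filter.2 ⟨Finset.mem_univ K, hK⟩) ⟨hNz, hz⟩
        have := hg z hzC
        rw [inv_mul_le_iff₀ hcpos, mul_one]
        exact le_of_lt this
      have hfx : g x = N x * g u := by
        conv_lhs => rw [show x = N x • u by
          rw [hu, smul_smul, mul_inv_cancel₀ (ne_of_gt hNx), one_smul]]
        rw [map_smul, smul_eq_mul]
      have hge : dotp x y ≤ coordNorm N l x :=
        le_csSup (coordNorm_bddAbove hN hm hlow hl x) ⟨y, hdc, rfl⟩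
      rw [hdot, hfx, heq] at hge
      have hgu : 1 < c⁻¹ * g u := by
        rw [lt_inv_mul_iff₀ hcpos, mul_one]; exact hc
      nlinarith
    -- Step 2: u is an extreme point of C, hence in S₀
    have huext : u ∈ C.extremePoints ℝ := by
      refine ⟨huC, fun x₁ h₁ x₂ h₂ hseg => ?_⟩
      exact (hsc u hNu).2 (hCB h₁) (hCB h₂) hseg
    have huS₀ : u ∈ S₀ := extremePoints_convexHull_subset huext
    rw [hS₀] at huS₀
    obtain ⟨K, hKmem, huK⟩ := Set.mem_iUnion₂.1 huS₀
    have hKl : K.card ≤ l := by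
      rw [hKc] at hKmem; simpa using hKmem
    have hsupp : Function.support x ⊆ (K : Set (Fin d)) := by
      intro j hj
      by_contra hjK
      have : u j = 0 := huK.2 j (by simpa using hjK)
      rw [hu] at this
      simp only [Pi.smul_apply, smul_eq_mul] at this
      rcases mul_eq_zero.1 this with h | h
      · exact absurd h (inv_ne_zero (ne_of_gt hNx))
      · exact hj h
    calc ell0 x = (Function.support x).ncard := rfl
      _ ≤ (K : Set (Fin d)).ncard := Set.ncard_le_ncard hsupp (K : Set (Fin d)).toFinite
      _ = K.card := Set.ncard_coe_finset K
      _ ≤ l := hKl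

end Hard


theorem statement8 {d : ℕ} (N : (Fin d → ℝ) → ℝ) (hN : IsNorm N)
    (hsc : ∀ x : Fin d → ℝ, N x = 1 → x ∈ Set.extremePoints ℝ {z : Fin d → ℝ | N z ≤ 1}) :
    ∀ l : ℕ, 1 ≤ l → l ≤ d → ∀ x : Fin d → ℝ, (ell0 x ≤ l ↔ coordNorm N l x = N x) := by
  intro l hl hld x
  obtain ⟨m, hm, hlow⟩ := exists_low hN (le_trans hl hld)
  constructor
  · intro h0
    have hfin : (Function.support x).Finite := Set.toFinite _
    set K := hfin.toFinset with hK
    have hKcard : K.card ≤ l := by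
      rw [hK, ← Set.ncard_eq_toFinset_card]
      exact h0
    have hsupp : x ∈ RK K := by
      intro j hj
      by_contra hj0
      exact hj (by rw [hK]; exact hfin.mem_toFinset.2 hj0)
    exact le_antisymm (coordNorm_le_N hN hm hlow hKcard hsupp) (coordNorm_ge_N hN hm hlow hl x)
  · intro heq
    exact ell0_le_of_coordNorm_eq hN hm hlow hl hsc x heq
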